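/- arXiv:2306.08385 — 4 statements merged into one kernel-verified Lean document; each statement's English description precedes it below -/
import Mathlib

section
/- Let α ∈ (0,∞)^n with Σ_i α_i = 1, and let g_1,...,g_n be i.i.d. standard Gumbel random variables. Then for each index k, P(log α_k + g_k > log α_i + g_i for all i ≠ k) = α_k. -/
open MeasureTheory ProbabilityTheory Filter intervalIntegral

lemma meas_lt_cdf {Ω : Type*} [MeasurableSpace Ω] (μ : Measure Ω) {g : Ω → ℝ}
    (hcdf : ∀ x, μ {ω | g ω ≤ x} = ENNReal.ofReal (Real.exp (-Real.exp (-x)))) (x : ℝ) :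
    μ {ω | g ω < x} = ENNReal.ofReal (Real.exp (-Real.exp (-x))) := by
  have hU : {ω | g ω < x} = ⋃ n : ℕ, {ω | g ω ≤ x - ((n : ℝ) + 1)⁻¹} := by
    ext ω
    simp only [Set.mem_setOf_eq, Set.mem_iUnion]
    constructor
    · intro h
      obtain ⟨n, hn⟩ := exists_nat_one_div_lt (sub_pos.mpr h)
      exact ⟨n, by rw [one_div] at hn; linarith⟩
    · rintro ⟨n, hn⟩
      have : (0 : ℝ) < ((n : ℝ) + 1)⁻¹ := by positivity
      linarith
  have hmono : Monotone fun n : ℕ => {ω | g ω ≤ x - ((n : ℝ) + 1)⁻¹} := by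
    intro a b hab ω h
    simp only [Set.mem_setOf_eq] at h ⊢
    have : ((b : ℝ) + 1)⁻¹ ≤ ((a : ℝ) + 1)⁻¹ := by
      gcongr

    linarith
  have h1 := tendsto_measure_iUnion_atTop (μ := μ) hmono
  have h2 : Tendsto (fun n : ℕ => μ {ω | g ω ≤ x - ((n : ℝ) + 1)⁻¹}) atTop
      (nhds (ENNReal.ofReal (Real.exp (-Real.exp (-x))))) := by
    simp only [hcdf]
    have hx : Tendsto (fun n : ℕ => x - ((n : ℝ) + 1)⁻¹) atTop (nhds x) := by
      have h0 : Tendsto (fun n : ℕ => ((n : ℝ) + 1)⁻¹) atTop (nhds 0) := by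
        simpa [one_div] using tendsto_one_div_add_atTop_nhds_zero_nat (𝕜 := ℝ)
      simpa using tendsto_const_nhds.sub h0
    have hF : Continuous fun t : ℝ => Real.exp (-Real.exp (-t)) := by continuity
    exact (ENNReal.continuous_ofReal.tendsto _).comp ((hF.tendsto x).comp hx)
  rw [hU]
  exact tendsto_nhds_unique h1 h2

lemma lintegral_gumbel {β : ℝ} (hβ : 0 < β) (ν : Measure ℝ) [IsProbabilityMeasure ν]
    (hcdf : ∀ x, ν (Set.Iic x) = ENNReal.ofReal (Real.exp (-Real.exp (-x)))) :
    ∫⁻ t, ENNReal.ofReal (Real.exp (-(β * Real.exp (-t)))) ∂ν = ENNReal.ofReal (β + 1)⁻¹ := by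
  have hfm : Measurable fun t : ℝ => Real.exp (-(β * Real.exp (-t))) :=
    Real.measurable_exp.comp ((measurable_const.mul (Real.measurable_exp.comp measurable_neg)).neg)
  rw [lintegral_eq_lintegral_meas_lt ν (Eventually.of_forall fun t => (Real.exp_pos _).le)
    hfm.aemeasurable]
  have key : ∀ s ∈ Set.Ioi (0 : ℝ),
      ν {a | s < Real.exp (-(β * Real.exp (-a)))} = ENNReal.ofReal (1 - s ^ β⁻¹) := by
    intro s hs
    rw [Set.mem_Ioi] at hs
    rcases le_or_gt 1 s with h1 | h1
    · have hempty : {a | s < Real.exp (-(β * Real.exp (-a)))} = ∅ := by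
        ext t
        simp only [Set.mem_setOf_eq, Set.mem_empty_iff_false, iff_false, not_lt]
        have hlt : Real.exp (-(β * Real.exp (-t))) < 1 := by
          rw [Real.exp_lt_one_iff]
          have := Real.exp_pos (-t)
          nlinarith
        linarith
      rw [hempty]
      have hge : (1 : ℝ) ≤ s ^ β⁻¹ := Real.one_le_rpow h1 (inv_nonneg.mpr hβ.le)
      simp [ENNReal.ofReal_eq_zero.mpr (by linarith : 1 - s ^ β⁻¹ ≤ 0)]
    · have hls : Real.log s < 0 := Real.log_neg hs h1
      have hpos : 0 < -Real.log s / β := div_pos (neg_pos.mpr hls) hβ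
      set c := -Real.log (-Real.log s / β) with hc
      have hset : {a | s < Real.exp (-(β * Real.exp (-a)))} = Set.Ioi c := by
        ext t
        simp only [Set.mem_setOf_eq, Set.mem_Ioi]
        rw [← Real.log_lt_iff_lt_exp hs, lt_neg, ← lt_div_iff₀' hβ, ← Real.exp_log hpos,
          Real.exp_lt_exp, hc]
        constructor <;> intro h <;> linarith
      rw [hset, ← Set.compl_Iic, measure_compl measurableSet_Iic (measure_ne_top _ _),
        measure_univ, hcdf]
      have hec : Real.exp (-c) = -Real.log s / β := by rw [hc, neg_neg, Real.exp_log hpos]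
      have hx : Real.exp (-Real.exp (-c)) = s ^ β⁻¹ := by
        rw [hec, Real.rpow_def_of_pos hs]
        congr 1
        rw [neg_div, neg_neg, div_eq_mul_inv]
      rw [hx, ENNReal.ofReal_sub _ (Real.rpow_nonneg hs.le _), ENNReal.ofReal_one]
  rw [setLIntegral_congr_fun measurableSet_Ioi key]
  rw [← Set.Ioc_union_Ioi_eq_Ioi (zero_le_one' ℝ),
    lintegral_union measurableSet_Ioi (Set.Ioc_disjoint_Ioi le_rfl)]
  have hz : ∫⁻ s in Set.Ioi (1 : ℝ), ENNReal.ofReal (1 - s ^ β⁻¹) = 0 := by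
    rw [setLIntegral_congr_fun measurableSet_Ioi
      (fun s hs => ?_), lintegral_zero]
    have hge : (1 : ℝ) ≤ s ^ β⁻¹ := Real.one_le_rpow (le_of_lt hs) (inv_nonneg.mpr hβ.le)
    exact ENNReal.ofReal_eq_zero.mpr (by linarith)
  rw [hz, add_zero]
  have hmes : Measurable fun s : ℝ => 1 - s ^ β⁻¹ :=
    (Real.continuous_rpow_const (inv_nonneg.mpr hβ.le)).measurable.const_sub 1
  have hb : ∀ s ∈ Set.Ioc (0 : ℝ) 1, 0 ≤ 1 - s ^ β⁻¹ ∧ 1 - s ^ β⁻¹ ≤ 1 := by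
    intro s hs
    constructor
    · have := Real.rpow_le_one hs.1.le hs.2 (inv_nonneg.mpr hβ.le)
      linarith
    · have := Real.rpow_nonneg hs.1.le β⁻¹
      linarith
  have hint : IntegrableOn (fun s : ℝ => 1 - s ^ β⁻¹) (Set.Ioc (0 : ℝ) 1) := by
    apply Measure.integrableOn_of_bounded (M := 1) measure_Ioc_lt_top.ne
      hmes.aestronglyMeasurable
    refine (ae_restrict_iff' measurableSet_Ioc).mpr (Eventually.of_forall fun s hs => ?_)
    rw [Real.norm_eq_abs, abs_le]
    exact ⟨by linarith [(hb s hs).1], (hb s hs).2⟩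
  have hnn : 0 ≤ᵐ[volume.restrict (Set.Ioc (0 : ℝ) 1)] fun s : ℝ => 1 - s ^ β⁻¹ :=
    (ae_restrict_iff' measurableSet_Ioc).mpr (Eventually.of_forall fun s hs => (hb s hs).1)
  rw [← ofReal_integral_eq_lintegral_ofReal hint hnn]
  congr 1
  rw [← integral_of_le (zero_le_one' ℝ),
    integral_sub intervalIntegrable_const
      (intervalIntegrable_rpow (Or.inl (inv_nonneg.mpr hβ.le))),
    intervalIntegral.integral_const (c := (1 : ℝ)),
    integral_rpow (Or.inl (by linarith [inv_pos.mpr hβ] : (-1 : ℝ) < β⁻¹)),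
    Real.one_rpow, Real.zero_rpow (by positivity : β⁻¹ + 1 ≠ 0)]
  have hβ1 : β⁻¹ + 1 ≠ 0 := by positivity
  field_simp
  ring

/-- Gumbel-max trick: if `α ∈ (0,∞)^n` sums to one and `g_1, ..., g_n` are i.i.d. standard
Gumbel random variables (CDF `exp(-exp(-x))`), then for each `k`,
`P(log α_k + g_k > log α_i + g_i, ∀ i ≠ k) = α_k`. -/
theorem gumbel_max_trick {Ω : Type*} [MeasurableSpace Ω] (μ : Measure Ω)
    [IsProbabilityMeasure μ] (n : ℕ) (α : Fin n → ℝ) (hα : ∀ i, 0 < α i)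
    (hsum : ∑ i, α i = 1) (g : Fin n → Ω → ℝ) (hg : ∀ i, Measurable (g i))
    (hindep : iIndepFun g μ)
    (hcdf : ∀ i x, μ {ω | g i ω ≤ x} = ENNReal.ofReal (Real.exp (-Real.exp (-x))))
    (k : Fin n) :
    μ {ω | ∀ i, i ≠ k → Real.log (α i) + g i ω < Real.log (α k) + g k ω}
      = ENNReal.ofReal (α k) := by
  classical
  by_cases hone : ∀ i, i = k
  · have hset : {ω : Ω | ∀ i, i ≠ k → Real.log (α i) + g i ω < Real.log (α k) + g k ω}
        = Set.univ := by
      ext ω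
      simp only [Set.mem_setOf_eq, Set.mem_univ, iff_true]
      intro i hik
      exact absurd (hone i) hik
    have hαk : α k = 1 :=
      ((Fintype.sum_eq_single k fun i hi => absurd (hone i) hi).symm).trans hsum
    rw [hset, measure_univ, hαk, ENNReal.ofReal_one]
  · push_neg at hone
    obtain ⟨j, hj⟩ := hone
    set T : Finset (Fin n) := Finset.univ.erase k with hT
    have hjT : j ∈ T := Finset.mem_erase.mpr ⟨hj, Finset.mem_univ j⟩
    set Y : Ω → ({x // x ∈ T} → ℝ) := fun ω i => g i ω with hYdef
    have hYm : Measurable Y := measurable_pi_lambda _ fun i => hg i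
    have hXY : IndepFun (g k) Y μ := by
      have hd : Disjoint ({k} : Finset (Fin n)) T := by
        simp [hT, Finset.disjoint_singleton_left]
      have h := hindep.indepFun_finset {k} T hd hg
      exact h.comp
        (measurable_pi_apply (⟨k, Finset.mem_singleton_self k⟩ :
          {x // x ∈ ({k} : Finset (Fin n))})) measurable_id
    set ν := μ.map (g k) with hν
    set ρ := μ.map Y with hρ
    haveI : IsProbabilityMeasure ν := Measure.isProbabilityMeasure_map (hg k).aemeasurable
    haveI : IsProbabilityMeasure ρ := Measure.isProbabilityMeasure_map hYm.aemeasurable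
    set S' : Set (ℝ × ({x // x ∈ T} → ℝ)) :=
      {p | ∀ i : {x // x ∈ T}, Real.log (α i) + p.2 i < Real.log (α k) + p.1} with hS'
    have hS'm : MeasurableSet S' := by
      have hrw : S' = ⋂ i : {x // x ∈ T},
          {p : ℝ × ({x // x ∈ T} → ℝ) | Real.log (α i) + p.2 i < Real.log (α k) + p.1} := by
        ext p; simp [hS', Set.mem_iInter]
      rw [hrw]
      exact MeasurableSet.iInter fun i =>
        measurableSet_lt
          (measurable_const.add (measurable_snd.eval (a := i)))
          (measurable_const.add measurable_fst)
    have hev : {ω : Ω | ∀ i, i ≠ k → Real.log (α i) + g i ω < Real.log (α k) + g k ω}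
        = (fun ω => (g k ω, Y ω)) ⁻¹' S' := by
      ext ω
      simp only [Set.mem_setOf_eq, Set.mem_preimage, hS', hYdef]
      constructor
      · intro h i
        exact h i (Finset.ne_of_mem_erase i.2)
      · intro h i hik
        exact h ⟨i, Finset.mem_erase.mpr ⟨hik, Finset.mem_univ i⟩⟩
    have hsumT : ∑ i ∈ T, α i = 1 - α k := by
      have h := Finset.sum_erase_add Finset.univ α (Finset.mem_univ k)
      rw [hsum] at h
      rw [hT]
      linarith
    have hβpos : 0 < (1 - α k) / α k := by
      have h2 : 0 < ∑ i ∈ T, α i := Finset.sum_pos (fun i _ => hα i) ⟨j, hjT⟩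
      rw [hsumT] at h2
      exact div_pos h2 (hα k)
    rw [hev, ← Measure.map_apply ((hg k).prodMk hYm) hS'm,
      (indepFun_iff_map_prod_eq_prod_map_map (hg k).aemeasurable hYm.aemeasurable).mp hXY,
      Measure.prod_apply hS'm]
    have hsec : ∀ t : ℝ, ρ (Prod.mk t ⁻¹' S')
        = ENNReal.ofReal (Real.exp (-((1 - α k) / α k * Real.exp (-t)))) := by
      intro t
      rw [hρ, Measure.map_apply hYm (hS'm.preimage measurable_prodMk_left)]
      have hpre : Y ⁻¹' (Prod.mk t ⁻¹' S')
          = ⋂ i ∈ T, g i ⁻¹' Set.Iio (Real.log (α k) + t - Real.log (α i)) := by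
        ext ω
        simp only [Set.mem_preimage, Set.mem_setOf_eq, Set.mem_iInter, Set.mem_Iio, hYdef, hS']
        constructor
        · intro h i hi
          have := h ⟨i, hi⟩
          linarith
        · intro h i
          have := h i i.2
          linarith
      rw [hpre, hindep.meas_biInter fun i hi => ⟨Set.Iio _, measurableSet_Iio, rfl⟩]
      have hfac : ∀ i ∈ T, μ (g i ⁻¹' Set.Iio (Real.log (α k) + t - Real.log (α i)))
          = ENNReal.ofReal (Real.exp (-(α i / α k * Real.exp (-t)))) := by
        intro i hi
        have hm := meas_lt_cdf μ (hcdf i) (Real.log (α k) + t - Real.log (α i))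
        rw [show g i ⁻¹' Set.Iio (Real.log (α k) + t - Real.log (α i))
            = {ω | g i ω < Real.log (α k) + t - Real.log (α i)} from rfl, hm]
        congr 2
        rw [show -(Real.log (α k) + t - Real.log (α i))
            = Real.log (α i) + (-Real.log (α k) + -t) by ring, Real.exp_add, Real.exp_add,
          Real.exp_log (hα i), Real.exp_neg, Real.exp_log (hα k)]
        try ring
      rw [Finset.prod_congr rfl hfac,
        ← ENNReal.ofReal_prod_of_nonneg fun i _ => (Real.exp_pos _).le]
      congr 1
      rw [← Real.exp_sum]
      congr 1
      have hterm : ∀ a : ℝ, -(a / α k * Real.exp (-t)) = a * -(Real.exp (-t) / α k) :=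
        fun a => by ring
      simp only [hterm]
      rw [← Finset.sum_mul, hsumT]
      try ring
    simp_rw [← hρ, ← hν, hsec]
    have hνcdf : ∀ x, ν (Set.Iic x) = ENNReal.ofReal (Real.exp (-Real.exp (-x))) := by
      intro x
      rw [hν, Measure.map_apply (hg k) measurableSet_Iic]
      exact hcdf k x
    rw [lintegral_gumbel hβpos ν hνcdf]
    congr 1
    rw [div_add' _ _ _ (hα k).ne', one_mul, sub_add_cancel, one_div, inv_inv]
end

section
/- Let w ~ N(0, I_d) and x, y ∈ ℝ^d. Define the single positive random feature estimator Z = exp(wᵀx - ‖x‖²/2) · exp(wᵀy - ‖y‖²/2). Then E[Z] = exp(xᵀy), i.e., Z is an unbiased estimator of the softmax kernel SM(x,y) = exp(xᵀy). -/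
open MeasureTheory ProbabilityTheory Real
open scoped NNReal ENNReal

lemma gauss_mgf (c : ℝ) :
    ∫ t, Real.exp (c * t) ∂(gaussianReal 0 1) = Real.exp (c ^ 2 / 2) := by
  rw [gaussianReal_of_var_ne_zero _ one_ne_zero]
  have hpdf : gaussianPDF 0 1
      = fun x => ((Real.toNNReal (gaussianPDFReal 0 1 x) : ℝ≥0) : ℝ≥0∞) := by
    ext x; simp [gaussianPDF, ENNReal.ofReal]
  rw [hpdf, integral_withDensity_eq_integral_smul
    ((measurable_gaussianPDFReal 0 1).real_toNNReal) _]
  have key : ∀ x : ℝ, (Real.toNNReal (gaussianPDFReal 0 1 x)) • Real.exp (c * x)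
      = (Real.sqrt (2 * π))⁻¹ * Real.exp (c ^ 2 / 2) * Real.exp (-(x - c) ^ 2 / 2) := by
    intro x
    rw [NNReal.smul_def, smul_eq_mul, Real.coe_toNNReal _ (gaussianPDFReal_nonneg _ _ _)]
    simp only [gaussianPDFReal, NNReal.coe_one, mul_one, sub_zero]
    rw [mul_assoc, mul_assoc, ← Real.exp_add, ← Real.exp_add]
    congr 1
    ring_nf
  simp_rw [key]
  rw [integral_const_mul,
    integral_sub_right_eq_self (fun a => Real.exp (-a ^ 2 / 2)) c]
  have hg : ∫ t : ℝ, Real.exp (-t ^ 2 / 2) = Real.sqrt (2 * π) := by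
    have h := integral_gaussian (1 / 2 : ℝ)
    rw [show π / (1 / 2 : ℝ) = 2 * π by ring] at h
    rw [← h]
    congr 1 with t
    ring_nf
  rw [hg]
  have hs : Real.sqrt (2 * π) ≠ 0 := by positivity
  field_simp

lemma integral_pi_prod {n : ℕ} (ν : Measure ℝ) [SigmaFinite ν] (f : Fin n → ℝ → ℝ) :
    ∫ v : Fin n → ℝ, ∏ i, f i (v i) ∂(Measure.pi fun _ => ν)
      = ∏ i, ∫ t, f i t ∂ν := by
  induction n with
  | zero =>
      simp only [Finset.univ_eq_empty, Finset.prod_empty, integral_const,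
        measureReal_def, Measure.pi_empty_univ, ENNReal.toReal_one, smul_eq_mul, mul_one, one_smul]
  | succ n n_ih =>
      calc
        _ = ∫ p : ℝ × (Fin n → ℝ),
            f 0 p.1 * ∏ i : Fin n, f (Fin.succ i) (p.2 i)
            ∂(ν.prod (Measure.pi fun _ : Fin n => ν)) := by
          rw [← ((MeasureTheory.measurePreserving_piFinSuccAbove
            (fun _ : Fin (n + 1) => ν) 0).symm).integral_comp']
          simp [MeasurableEquiv.piFinSuccAbove_symm_apply, Fin.insertNthEquiv,
            Fin.prod_univ_succ, Fin.insertNth_zero, Fin.zero_succAbove]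
        _ = (∫ t, f 0 t ∂ν) * ∏ i : Fin n, ∫ t, f (Fin.succ i) t ∂ν := by
          rw [← n_ih, ← integral_prod_mul]
        _ = ∏ i, ∫ t, f i t ∂ν := by rw [Fin.prod_univ_succ]

/-- The single positive random feature estimator
`Z = exp(wᵀx - ‖x‖²/2) · exp(wᵀy - ‖y‖²/2)` with `w ~ N(0, I_d)` is an unbiased estimator
of the softmax kernel: `E[Z] = exp(xᵀy)`. -/
theorem prf_unbiased {Ω : Type*} [MeasurableSpace Ω] (μ : Measure Ω)
    [IsProbabilityMeasure μ] (d : ℕ) (w : Ω → (Fin d → ℝ)) (hw : Measurable w)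
    (hmap : Measure.map w μ = Measure.pi (fun _ : Fin d => gaussianReal 0 1))
    (x y : Fin d → ℝ) :
    ∫ ω, Real.exp (∑ i, w ω i * x i - (∑ i, x i ^ 2) / 2)
        * Real.exp (∑ i, w ω i * y i - (∑ i, y i ^ 2) / 2) ∂μ
      = Real.exp (∑ i, x i * y i) := by
  have hint : ∀ ω, Real.exp (∑ i, w ω i * x i - (∑ i, x i ^ 2) / 2)
      * Real.exp (∑ i, w ω i * y i - (∑ i, y i ^ 2) / 2)
      = Real.exp (-((∑ i, x i ^ 2) / 2 + (∑ i, y i ^ 2) / 2))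
        * ∏ i, Real.exp ((x i + y i) * w ω i) := by
    intro ω
    rw [← Real.exp_sum, ← Real.exp_add, ← Real.exp_add]
    congr 1
    simp only [add_mul, Finset.sum_add_distrib]
    ring_nf
    rw [Finset.sum_congr rfl (fun i _ => mul_comm (w ω i) (x i)),
      Finset.sum_congr rfl (fun i _ => mul_comm (w ω i) (y i))]
    ring
  simp_rw [hint]
  rw [integral_const_mul]
  have hmeas : AEStronglyMeasurable
      (fun v : Fin d → ℝ => ∏ i, Real.exp ((x i + y i) * v i)) (Measure.map w μ) := by
    refine (Finset.measurable_prod _ fun i _ => ?_).aestronglyMeasurable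
    exact (measurable_const.mul (measurable_pi_apply i)).exp
  rw [show ∫ ω, ∏ i, Real.exp ((x i + y i) * w ω i) ∂μ
      = ∫ v : Fin d → ℝ, ∏ i, Real.exp ((x i + y i) * v i) ∂(Measure.map w μ) from
    (integral_map hw.aemeasurable hmeas).symm, hmap,
    integral_pi_prod _ (fun i t => Real.exp ((x i + y i) * t))]
  simp_rw [gauss_mgf]
  rw [← Real.exp_sum, ← Real.exp_add]
  congr 1
  have hsum : ∑ i, (x i + y i) ^ 2 / 2
      = (∑ i, x i ^ 2) / 2 + (∑ i, y i ^ 2) / 2 + ∑ i, x i * y i := by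
    simp only [show ∀ i, (x i + y i) ^ 2 / 2 = x i ^ 2 / 2 + y i ^ 2 / 2 + x i * y i
        from fun i => by ring,
      Finset.sum_add_distrib, Finset.sum_div]
  rw [hsum]
  ring
end

section
/- Let w_1,...,w_m be i.i.d. N(0, I_d) vectors and define the m-feature estimator SM̂_m(x,y) = (1/m) Σ_{i=1}^m exp(w_iᵀx - ‖x‖²/2) exp(w_iᵀy - ‖y‖²/2). Then E[SM̂_m(x,y)] = exp(xᵀy) and Var(SM̂_m(x,y)) = (1/m) exp(‖x+y‖²) exp(2xᵀy) (1 - exp(-‖x+y‖²)). -/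
open MeasureTheory ProbabilityTheory

open scoped ENNReal NNReal

lemma gauss_pdf_key (t x : ℝ) :
    gaussianPDFReal 0 1 x * Real.exp (x * t) = Real.exp (t ^ 2 / 2) * gaussianPDFReal t 1 x := by
  simp only [gaussianPDFReal, NNReal.coe_one, mul_one, sub_zero]
  rw [mul_assoc, ← Real.exp_add, mul_comm (Real.exp (t ^ 2 / 2)), mul_assoc, ← Real.exp_add]
  congr 1
  ring

lemma gauss_exp_integral (t : ℝ) :
    Integrable (fun v => Real.exp (v * t)) (gaussianReal 0 1) ∧
      ∫ v, Real.exp (v * t) ∂(gaussianReal 0 1) = Real.exp (t ^ 2 / 2) := by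
  have h1 : gaussianReal 0 1
      = volume.withDensity (fun x => ((Real.toNNReal (gaussianPDFReal 0 1 x) : ℝ≥0) : ℝ≥0∞)) := by
    rw [gaussianReal_of_var_ne_zero _ one_ne_zero]; rfl
  have hmeas : Measurable fun x => Real.toNNReal (gaussianPDFReal 0 1 x) :=
    (measurable_gaussianPDFReal 0 1).real_toNNReal
  have hkey : (fun x => Real.toNNReal (gaussianPDFReal 0 1 x) • Real.exp (x * t))
      = fun x => Real.exp (t ^ 2 / 2) * gaussianPDFReal t 1 x := by
    funext x
    rw [NNReal.smul_def, smul_eq_mul, Real.coe_toNNReal _ (gaussianPDFReal_nonneg 0 1 x),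
      gauss_pdf_key]
  constructor
  · rw [h1, integrable_withDensity_iff_integrable_smul hmeas]
    rw [show (fun x => (Real.toNNReal (gaussianPDFReal 0 1 x) : ℝ≥0) • Real.exp (x * t)) = _ from hkey]
    exact (integrable_gaussianPDFReal t 1).const_mul _
  · rw [h1, integral_withDensity_eq_integral_smul hmeas, hkey, integral_const_mul,
      integral_gaussianPDFReal_eq_one t one_ne_zero, mul_one]

lemma pi_exp_integral (d : ℕ) (z : Fin d → ℝ) :
    Integrable (fun v : Fin d → ℝ => Real.exp (∑ j, v j * z j))
        (Measure.pi fun _ : Fin d => gaussianReal 0 1) ∧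
      ∫ v, Real.exp (∑ j, v j * z j) ∂(Measure.pi fun _ : Fin d => gaussianReal 0 1)
        = Real.exp ((∑ j, z j ^ 2) / 2) := by
  letI : MeasureSpace ℝ := ⟨gaussianReal 0 1⟩
  haveI : SigmaFinite (volume : Measure ℝ) := inferInstanceAs (SigmaFinite (gaussianReal 0 1))
  have hpi : (Measure.pi fun _ : Fin d => gaussianReal 0 1) = (volume : Measure (Fin d → ℝ)) := rfl
  have hfun : (fun v : Fin d → ℝ => Real.exp (∑ j, v j * z j))
      = fun v : Fin d → ℝ => ∏ j, Real.exp (v j * z j) := by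
    funext v; rw [Real.exp_sum]
  rw [hpi, hfun]
  constructor
  · exact Integrable.fintype_prod (f := fun j t => Real.exp (t * z j))
      (fun j => (gauss_exp_integral (z j)).1)
  · rw [show (volume : Measure (Fin d → ℝ)) = Measure.pi fun _ => (volume : Measure ℝ) from rfl,
      integral_fintype_prod_eq_prod (f := fun j t => Real.exp (t * z j))]
    have : ∀ j, ∫ t, Real.exp (t * z j) = Real.exp (z j ^ 2 / 2) :=
      fun j => (gauss_exp_integral (z j)).2
    simp_rw [this, ← Real.exp_sum, Finset.sum_div]

/-- The `m`-feature positive random feature estimator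
`SM̂_m(x,y) = (1/m) Σ_i exp(w_iᵀx - ‖x‖²/2) exp(w_iᵀy - ‖y‖²/2)` with `w_1, ..., w_m` i.i.d.
standard Gaussian vectors satisfies `E[SM̂_m(x,y)] = exp(xᵀy)` and
`Var(SM̂_m(x,y)) = (1/m) exp(‖x+y‖²) exp(2xᵀy) (1 - exp(-‖x+y‖²))`. -/
theorem prf_m_mean_variance {Ω : Type*} [MeasurableSpace Ω] (μ : Measure Ω)
    [IsProbabilityMeasure μ] (d m : ℕ) (hm : 1 ≤ m) (w : Fin m → Ω → (Fin d → ℝ))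
    (hw : ∀ i, Measurable (w i))
    (hindep : iIndepFun w μ)
    (hmap : ∀ i, Measure.map (w i) μ = Measure.pi (fun _ : Fin d => gaussianReal 0 1))
    (x y : Fin d → ℝ) :
    (∫ ω, (1 / (m : ℝ)) * ∑ i, Real.exp (∑ j, w i ω j * x j - (∑ j, x j ^ 2) / 2)
        * Real.exp (∑ j, w i ω j * y j - (∑ j, y j ^ 2) / 2) ∂μ
      = Real.exp (∑ j, x j * y j)) ∧
    variance (fun ω => (1 / (m : ℝ)) * ∑ i,
        Real.exp (∑ j, w i ω j * x j - (∑ j, x j ^ 2) / 2)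
        * Real.exp (∑ j, w i ω j * y j - (∑ j, y j ^ 2) / 2)) μ
      = (1 / (m : ℝ)) * Real.exp (∑ j, (x j + y j) ^ 2)
        * Real.exp (2 * ∑ j, x j * y j) * (1 - Real.exp (-(∑ j, (x j + y j) ^ 2))) := by
  have hm0 : (m : ℝ) ≠ 0 := Nat.cast_ne_zero.2 (by omega)
  set π : Measure (Fin d → ℝ) := Measure.pi fun _ : Fin d => gaussianReal 0 1 with hπ
  set S : ℝ := ∑ j, (x j + y j) ^ 2 with hSdef
  set T : ℝ := ∑ j, x j * y j with hTdef
  set c : ℝ := ((∑ j, x j ^ 2) + (∑ j, y j ^ 2)) / 2 with hcdef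
  have hS : S = 2 * c + 2 * T := by
    simp only [hSdef, hcdef, hTdef, add_sq, Finset.sum_add_distrib, Finset.mul_sum]
    ring
  set F : (Fin d → ℝ) → ℝ := fun v =>
    Real.exp (∑ j, v j * x j - (∑ j, x j ^ 2) / 2)
      * Real.exp (∑ j, v j * y j - (∑ j, y j ^ 2) / 2) with hFdef
  have hF_eq : F = fun v => Real.exp (-c) * Real.exp (∑ j, v j * (x j + y j)) := by
    funext v
    simp only [hFdef]
    rw [← Real.exp_add, ← Real.exp_add]
    congr 1
    simp only [mul_add, Finset.sum_add_distrib, hcdef]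
    ring
  have hF_cont : Continuous F := by
    apply Continuous.mul <;>
      exact Real.continuous_exp.comp ((continuous_finset_sum _ fun j _ =>
        (continuous_apply j).mul continuous_const).sub continuous_const)
  have hF_meas : Measurable F := hF_cont.measurable
  have hFsq_eq : (fun v => F v ^ 2)
      = fun v => Real.exp (-(2 * c)) * Real.exp (∑ j, v j * (2 * (x j + y j))) := by
    funext v
    rw [hF_eq]
    rw [mul_pow, ← Real.exp_nat_mul, ← Real.exp_nat_mul]
    congr 1
    · norm_num
    · push_cast
      rw [Finset.mul_sum]
      congr 1
      exact Finset.sum_congr rfl fun j _ => by ring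
  -- integrals over π
  have hI1 : Integrable F π :=
    hF_eq ▸ ((pi_exp_integral d fun j => x j + y j).1.const_mul _)
  have hE1 : ∫ v, F v ∂π = Real.exp (-c) * Real.exp (S / 2) := by
    rw [hF_eq, integral_const_mul, (pi_exp_integral d fun j => x j + y j).2, hSdef]
  have hI2 : Integrable (fun v => F v ^ 2) π :=
    hFsq_eq ▸ ((pi_exp_integral d fun j => 2 * (x j + y j)).1.const_mul _)
  have hE2 : ∫ v, F v ^ 2 ∂π = Real.exp (-(2 * c)) * Real.exp (2 * S) := by
    rw [hFsq_eq, integral_const_mul, (pi_exp_integral d fun j => 2 * (x j + y j)).2]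
    congr 1
    have h4 : (∑ j, (2 * (x j + y j)) ^ 2) = 4 * S := by
      rw [hSdef, Finset.mul_sum]
      exact Finset.sum_congr rfl fun j _ => by ring
    rw [h4]; ring
  set X : Fin m → Ω → ℝ := fun i ω => F (w i ω) with hXdef
  have hXmeas : ∀ i, Measurable (X i) := fun i => hF_meas.comp (hw i)
  have hXint : ∀ i, Integrable (X i) μ := fun i => by
    have := (integrable_map_measure hF_cont.aestronglyMeasurable (hw i).aemeasurable).mp
      (by rw [hmap i]; exact hI1)
    exact this
  have hEX : ∀ i, ∫ ω, X i ω ∂μ = Real.exp (-c) * Real.exp (S / 2) := fun i => by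
    rw [← hE1, ← hmap i, integral_map (hw i).aemeasurable hF_cont.aestronglyMeasurable]
  have hX2int : ∀ i, Integrable (fun ω => X i ω ^ 2) μ := fun i => by
    have := (integrable_map_measure (hF_cont.pow 2).aestronglyMeasurable (hw i).aemeasurable).mp
      (by rw [hmap i]; exact hI2)
    exact this
  have hEX2 : ∀ i, ∫ ω, X i ω ^ 2 ∂μ = Real.exp (-(2 * c)) * Real.exp (2 * S) := fun i => by
    rw [← hE2, ← hmap i,
      integral_map (f := fun v => F v ^ 2) (hw i).aemeasurable (hF_cont.pow 2).aestronglyMeasurable]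
  have hmem : ∀ i, MemLp (X i) 2 μ := fun i =>
    (memLp_two_iff_integrable_sq (hXmeas i).aestronglyMeasurable).2 (hX2int i)
  have hvar : ∀ i, variance (X i) μ
      = Real.exp (-(2 * c)) * Real.exp (2 * S) - (Real.exp (-c) * Real.exp (S / 2)) ^ 2 := by
    intro i
    rw [variance_eq_sub (hmem i)]
    congr 1
    · rw [← hEX2 i]; congr 1
    · rw [hEX i]
  constructor
  · have : ∀ ω, (1 / (m : ℝ)) * ∑ i, Real.exp (∑ j, w i ω j * x j - (∑ j, x j ^ 2) / 2)
        * Real.exp (∑ j, w i ω j * y j - (∑ j, y j ^ 2) / 2)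
        = (1 / (m : ℝ)) * ∑ i, X i ω := fun ω => rfl
    simp_rw [this]
    rw [integral_const_mul, integral_finset_sum _ fun i _ => hXint i]
    simp_rw [hEX]
    rw [Finset.sum_const, Finset.card_univ, Fintype.card_fin, nsmul_eq_mul]
    rw [← Real.exp_add, show -c + S / 2 = T by rw [hS]; ring]
    field_simp
  · have heq : (fun ω => (1 / (m : ℝ)) * ∑ i,
        Real.exp (∑ j, w i ω j * x j - (∑ j, x j ^ 2) / 2)
        * Real.exp (∑ j, w i ω j * y j - (∑ j, y j ^ 2) / 2))
        = fun ω => (1 / (m : ℝ)) * (∑ i, X i) ω := by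
      funext ω; simp [hXdef, hFdef]
    rw [heq, variance_const_mul, IndepFun.variance_sum (fun i _ => hmem i)
      (fun i _ j _ hij => (hindep.indepFun hij).comp hF_meas hF_meas)]
    simp_rw [hvar]
    rw [Finset.sum_const, Finset.card_univ, Fintype.card_fin, nsmul_eq_mul]
    have key : Real.exp (-(2 * c)) * Real.exp (2 * S) - (Real.exp (-c) * Real.exp (S / 2)) ^ 2
        = Real.exp S * Real.exp (2 * T) * (1 - Real.exp (-S)) := by
      rw [mul_pow, ← Real.exp_nat_mul, ← Real.exp_nat_mul, ← Real.exp_add, ← Real.exp_add,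
        mul_sub, mul_one, ← Real.exp_add, ← Real.exp_add]
      push_cast
      congr 2 <;> · rw [hS]; ring
    rw [key]
    field_simp
end

section
/- Let q, k ∈ ℝ^d with ‖q‖ ≤ r and ‖k‖ ≤ r, let τ > 0, and let SM̂_m be the positive random feature estimator of the softmax kernel with m i.i.d. Gaussian features applied to q/√τ and k/√τ. Then Var(SM̂_m(q/√τ, k/√τ)) ≤ exp(6r²/τ)/m, and hence for any ε ∈ (0,1), with probability at least 1 - ε, |SM̂_m(q/√τ, k/√τ) - exp(qᵀk/τ)| ≤ sqrt(exp(6r²/τ)/(mε)). -/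
open MeasureTheory ProbabilityTheory
open Real
open scoped NNReal ENNReal

lemma pdf_mul_exp (t x : ℝ) :
    (gaussianPDFReal 0 1 x) * Real.exp (t * x)
      = (Real.sqrt (2 * π))⁻¹ * (Real.exp (t ^ 2 / 2) * Real.exp (-(1/2) * (x - t) ^ 2)) := by
  rw [gaussianPDFReal]
  push_cast
  rw [mul_one, mul_assoc, ← Real.exp_add, ← Real.exp_add]
  ring_nf

lemma integrable_gauss_shift (t : ℝ) :
    Integrable (fun x : ℝ => Real.exp (-(1/2) * (x - t) ^ 2)) :=
  (integrable_exp_neg_mul_sq (by norm_num : (0:ℝ) < 1/2)).comp_sub_right t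

lemma integral_gauss_shift (t : ℝ) :
    ∫ x : ℝ, Real.exp (-(1/2) * (x - t) ^ 2) = Real.sqrt (2 * π) := by
  rw [integral_sub_right_eq_self (fun x => Real.exp (-(1/2) * x ^ 2)) t,
    integral_gaussian]
  norm_num [mul_comm]

lemma integrable_exp_mul_gaussianReal (t : ℝ) :
    Integrable (fun x : ℝ => Real.exp (t * x)) (gaussianReal 0 1) := by
  rw [gaussianReal_of_var_ne_zero 0 one_ne_zero,
    integrable_withDensity_iff_integrable_smul' (measurable_gaussianPDF 0 1)
      (ae_of_all _ fun x => ENNReal.ofReal_lt_top)]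
  have : ∀ x : ℝ, (gaussianPDF 0 1 x).toReal • Real.exp (t * x)
      = (Real.sqrt (2 * π))⁻¹ * (Real.exp (t ^ 2 / 2) * Real.exp (-(1/2) * (x - t) ^ 2)) := by
    intro x
    rw [smul_eq_mul, gaussianPDF, ENNReal.toReal_ofReal (gaussianPDFReal_nonneg 0 1 x),
      pdf_mul_exp]
  simp_rw [this]
  exact ((integrable_gauss_shift t).const_mul _).const_mul _

lemma integral_exp_mul_gaussianReal (t : ℝ) :
    ∫ x, Real.exp (t * x) ∂(gaussianReal 0 1) = Real.exp (t ^ 2 / 2) := by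
  rw [gaussianReal_of_var_ne_zero 0 one_ne_zero]
  have h : (volume.withDensity (gaussianPDF 0 1))
      = volume.withDensity (fun x => ((gaussianPDFReal 0 1 x).toNNReal : ENNReal)) := rfl
  rw [h, integral_withDensity_eq_integral_smul
    (by exact (measurable_gaussianPDFReal 0 1).real_toNNReal) (fun x => Real.exp (t * x))]
  have : ∀ x : ℝ, ((gaussianPDFReal 0 1 x).toNNReal : ℝ≥0) • Real.exp (t * x)
      = (Real.sqrt (2 * π))⁻¹ * (Real.exp (t ^ 2 / 2) * Real.exp (-(1/2) * (x - t) ^ 2)) := by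
    intro x
    rw [NNReal.smul_def, smul_eq_mul, Real.coe_toNNReal _ (gaussianPDFReal_nonneg 0 1 x),
      pdf_mul_exp]
  simp_rw [this]
  rw [integral_const_mul, integral_const_mul, integral_gauss_shift]
  have h2π : Real.sqrt (2 * π) ≠ 0 := by
    positivity
  field_simp

lemma exp_sum_eq_prod {d : ℕ} (a : Fin d → ℝ) (v : Fin d → ℝ) :
    Real.exp (∑ j, v j * a j) = ∏ j, Real.exp (a j * v j) := by
  rw [← Real.exp_sum]
  congr 1
  exact Finset.sum_congr rfl fun j _ => mul_comm _ _

section PiGauss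

noncomputable local instance (priority := 2000) gaussSpace : MeasureSpace ℝ :=
  ⟨gaussianReal 0 1⟩

local instance : SigmaFinite (volume : Measure ℝ) :=
  inferInstanceAs (SigmaFinite (gaussianReal 0 1))

lemma integrable_exp_sum_pi {d : ℕ} (a : Fin d → ℝ) :
    Integrable (fun v : Fin d → ℝ => Real.exp (∑ j, v j * a j))
      (Measure.pi fun _ : Fin d => gaussianReal 0 1) := by
  have h : (Measure.pi fun _ : Fin d => gaussianReal 0 1)
      = (volume : Measure (Fin d → ℝ)) := rfl
  rw [h]
  have := Integrable.fintype_prod (f := fun (j : Fin d) (x : ℝ) => Real.exp (a j * x))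
    (fun j => _root_.integrable_exp_mul_gaussianReal (a j))
  exact this.congr (ae_of_all _ fun v => (exp_sum_eq_prod a v).symm)

lemma integral_exp_sum_pi {d : ℕ} (a : Fin d → ℝ) :
    ∫ v : Fin d → ℝ, Real.exp (∑ j, v j * a j) ∂(Measure.pi fun _ : Fin d => gaussianReal 0 1)
      = Real.exp ((∑ j, a j ^ 2) / 2) := by
  have h : (Measure.pi fun _ : Fin d => gaussianReal 0 1)
      = (volume : Measure (Fin d → ℝ)) := rfl
  rw [h]
  simp_rw [exp_sum_eq_prod a]
  rw [integral_fintype_prod_volume_eq_prod (f := fun (j : Fin d) (x : ℝ) => Real.exp (a j * x))]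
  have h2 : ∀ j : Fin d, (∫ x : ℝ, Real.exp (a j * x)) = Real.exp (a j ^ 2 / 2) :=
    fun j => integral_exp_mul_gaussianReal (a j)
  simp_rw [h2]
  rw [← Real.exp_sum, Finset.sum_div]

end PiGauss

/-- Approximation error for the softmax kernel (Theorem 1): with `‖q‖, ‖k‖ ≤ r` and
temperature `τ > 0`, the `m`-feature positive random feature estimator applied to
`q/√τ, k/√τ` has variance at most `exp(6r²/τ)/m`, hence with probability at least `1 - ε`
the approximation error to `exp(qᵀk/τ)` is at most `sqrt(exp(6r²/τ)/(mε))`. -/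
theorem softmax_kernel_approx_error {Ω : Type*} [MeasurableSpace Ω] (μ : Measure Ω)
    [IsProbabilityMeasure μ] (d m : ℕ) (hm : 1 ≤ m) (w : Fin m → Ω → (Fin d → ℝ))
    (hw : ∀ i, Measurable (w i))
    (hindep : iIndepFun w μ)
    (hmap : ∀ i, Measure.map (w i) μ = Measure.pi (fun _ : Fin d => gaussianReal 0 1))
    (q k : Fin d → ℝ) (r : ℝ) (hr : 0 < r)
    (hq : Real.sqrt (∑ j, q j ^ 2) ≤ r) (hk : Real.sqrt (∑ j, k j ^ 2) ≤ r)
    (τ : ℝ) (hτ : 0 < τ) (ε : ℝ) (hε : ε ∈ Set.Ioo (0 : ℝ) 1) :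
    (variance (fun ω => (1 / (m : ℝ)) * ∑ i,
        Real.exp (∑ j, w i ω j * (q j / Real.sqrt τ) - (∑ j, (q j / Real.sqrt τ) ^ 2) / 2)
        * Real.exp (∑ j, w i ω j * (k j / Real.sqrt τ)
            - (∑ j, (k j / Real.sqrt τ) ^ 2) / 2)) μ
      ≤ Real.exp (6 * r ^ 2 / τ) / m) ∧
    ENNReal.ofReal (1 - ε) ≤ μ {ω |
      |(1 / (m : ℝ)) * (∑ i,
          Real.exp (∑ j, w i ω j * (q j / Real.sqrt τ) - (∑ j, (q j / Real.sqrt τ) ^ 2) / 2)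
          * Real.exp (∑ j, w i ω j * (k j / Real.sqrt τ)
              - (∑ j, (k j / Real.sqrt τ) ^ 2) / 2))
        - Real.exp ((∑ j, q j * k j) / τ)|
      ≤ Real.sqrt (Real.exp (6 * r ^ 2 / τ) / (m * ε))} := by
  obtain ⟨hε0, hε1⟩ := hε
  have hmpos : (0 : ℝ) < m := by exact_mod_cast hm
  set x : Fin d → ℝ := fun j => q j / Real.sqrt τ with hxdef
  set y : Fin d → ℝ := fun j => k j / Real.sqrt τ with hydef
  set s : Fin d → ℝ := fun j => x j + y j with hsdef
  set A : ℝ := ∑ j, x j ^ 2 with hAdef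
  set B : ℝ := ∑ j, y j ^ 2 with hBdef
  set Sq : ℝ := ∑ j, s j ^ 2 with hSqdef
  set P : ℝ := ∑ j, x j * y j with hPdef
  set C : ℝ := Real.exp (-((A + B) / 2)) with hCdef
  set g : (Fin d → ℝ) → ℝ := fun v => C * Real.exp (∑ j, v j * s j) with hgdef
  -- basic scalar facts
  have hτsqrt : Real.sqrt τ * Real.sqrt τ = τ := Real.mul_self_sqrt hτ.le
  have sq_of_sqrt : ∀ a : ℝ, 0 ≤ a → Real.sqrt a ≤ r → a ≤ r ^ 2 := fun a ha h => by
    nlinarith [Real.sq_sqrt ha, Real.sqrt_nonneg a]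
  have hq2 : ∑ j, q j ^ 2 ≤ r ^ 2 :=
    sq_of_sqrt _ (Finset.sum_nonneg fun j _ => sq_nonneg (q j)) hq
  have hk2 : ∑ j, k j ^ 2 ≤ r ^ 2 :=
    sq_of_sqrt _ (Finset.sum_nonneg fun j _ => sq_nonneg (k j)) hk
  have hAeq : A = (∑ j, q j ^ 2) / τ := by
    rw [hAdef, Finset.sum_div]
    exact Finset.sum_congr rfl fun j _ => by rw [hxdef]; rw [div_pow, Real.sq_sqrt hτ.le]
  have hBeq : B = (∑ j, k j ^ 2) / τ := by
    rw [hBdef, Finset.sum_div]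
    exact Finset.sum_congr rfl fun j _ => by rw [hydef]; rw [div_pow, Real.sq_sqrt hτ.le]
  have hPeq : P = (∑ j, q j * k j) / τ := by
    rw [hPdef, Finset.sum_div]
    refine Finset.sum_congr rfl fun j _ => ?_
    rw [hxdef, hydef]
    rw [div_mul_div_comm, hτsqrt]
  have hA : A ≤ r ^ 2 / τ := hAeq ▸ by gcongr
  have hB : B ≤ r ^ 2 / τ := hBeq ▸ by gcongr
  have hP : P ≤ r ^ 2 / τ := by
    rw [hPeq]
    have hcs : (∑ j, q j * k j) ≤ r ^ 2 := by
      have h1 := Finset.sum_mul_sq_le_sq_mul_sq Finset.univ q k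
      have h2 : (∑ j, q j * k j) ^ 2 ≤ (r ^ 2) ^ 2 := by
        calc (∑ j, q j * k j) ^ 2 ≤ (∑ j, q j ^ 2) * ∑ j, k j ^ 2 := h1
        _ ≤ r ^ 2 * r ^ 2 := by
            have h0q : (0:ℝ) ≤ ∑ j, q j ^ 2 := Finset.sum_nonneg fun j _ => sq_nonneg _
            have h0k : (0:ℝ) ≤ ∑ j, k j ^ 2 := Finset.sum_nonneg fun j _ => sq_nonneg _
            exact mul_le_mul hq2 hk2 h0k (by positivity)
        _ = (r ^ 2) ^ 2 := by ring
      nlinarith [sq_nonneg (∑ j, q j * k j - r ^ 2), sq_nonneg r]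
    exact by gcongr
  have hSqEq : Sq = A + 2 * P + B := by
    rw [hSqdef, hAdef, hBdef, hPdef]
    rw [Finset.mul_sum, ← Finset.sum_add_distrib, ← Finset.sum_add_distrib]
    exact Finset.sum_congr rfl fun j _ => by rw [hsdef]; ring
  -- measurability of g
  have hgm : Measurable g := by
    apply measurable_const.mul
    exact (Finset.measurable_sum Finset.univ fun j _ =>
      (by fun_prop : Measurable fun v : Fin d → ℝ => v j * s j)).exp
  have hg2m : Measurable (fun v : Fin d → ℝ => g v ^ 2) := hgm.pow_const 2
  -- pointwise identity: the summand equals g ∘ w i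
  have hXeq : ∀ (i : Fin m) (ω : Ω),
      Real.exp (∑ j, w i ω j * (q j / Real.sqrt τ) - (∑ j, (q j / Real.sqrt τ) ^ 2) / 2)
        * Real.exp (∑ j, w i ω j * (k j / Real.sqrt τ)
            - (∑ j, (k j / Real.sqrt τ) ^ 2) / 2) = g (w i ω) := by
    intro i ω
    rw [hgdef]
    simp only [← hxdef, ← hydef, ← hAdef, ← hBdef]
    rw [hCdef, ← Real.exp_add, ← Real.exp_add]
    congr 1
    have : ∑ j, w i ω j * s j = (∑ j, w i ω j * x j) + ∑ j, w i ω j * y j := by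
      rw [← Finset.sum_add_distrib]
      exact Finset.sum_congr rfl fun j _ => by rw [hsdef]; ring
    rw [this]
    ring
  -- integrability and moments of g under the Gaussian pi measure
  have hg_int : Integrable g (Measure.pi fun _ : Fin d => gaussianReal 0 1) :=
    (integrable_exp_sum_pi s).const_mul C
  have hg2_eq : ∀ v : Fin d → ℝ, g v ^ 2 = C ^ 2 * Real.exp (∑ j, v j * (2 * s j)) := by
    intro v
    rw [hgdef]
    have : ∑ j, v j * (2 * s j) = 2 * ∑ j, v j * s j := by
      rw [Finset.mul_sum]; exact Finset.sum_congr rfl fun j _ => by ring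
    rw [this, mul_pow]
    congr 1
    rw [pow_two, ← Real.exp_add, two_mul]
  have hg2_int : Integrable (fun v => g v ^ 2) (Measure.pi fun _ : Fin d => gaussianReal 0 1) := by
    refine ((integrable_exp_sum_pi fun j => 2 * s j).const_mul (C ^ 2)).congr
      (ae_of_all _ fun v => ?_)
    exact (hg2_eq v).symm
  have hEg : ∫ v, g v ∂(Measure.pi fun _ : Fin d => gaussianReal 0 1)
      = C * Real.exp (Sq / 2) := by
    rw [hgdef]
    rw [integral_const_mul, integral_exp_sum_pi, ← hSqdef]
  have hEg2 : ∫ v, g v ^ 2 ∂(Measure.pi fun _ : Fin d => gaussianReal 0 1)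
      = C ^ 2 * Real.exp (2 * Sq) := by
    simp_rw [hg2_eq]
    rw [integral_const_mul, integral_exp_sum_pi]
    congr 2
    have : ∀ j : Fin d, (2 * s j) ^ 2 = 4 * s j ^ 2 := fun j => by ring
    simp_rw [this]
    rw [← Finset.mul_sum, ← hSqdef]
    ring
  -- transfer to μ via the maps w i
  have hXint : ∀ i, Integrable (fun ω => g (w i ω)) μ := fun i => by
    have := (integrable_map_measure hgm.aestronglyMeasurable (hw i).aemeasurable).mp
      (by rw [hmap i]; exact hg_int)
    exact this
  have hX2int : ∀ i, Integrable (fun ω => g (w i ω) ^ 2) μ := fun i => by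
    have := (integrable_map_measure hg2m.aestronglyMeasurable (hw i).aemeasurable).mp
      (by rw [hmap i]; exact hg2_int)
    exact this
  have hXE : ∀ i, ∫ ω, g (w i ω) ∂μ = C * Real.exp (Sq / 2) := fun i => by
    rw [← hEg, ← hmap i, integral_map (hw i).aemeasurable hgm.aestronglyMeasurable]
  have hXE2 : ∀ i, ∫ ω, g (w i ω) ^ 2 ∂μ = C ^ 2 * Real.exp (2 * Sq) := fun i => by
    rw [← hEg2, ← hmap i, integral_map (hw i).aemeasurable hg2m.aestronglyMeasurable]
  have hXmem : ∀ i, MemLp (fun ω => g (w i ω)) 2 μ := fun i =>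
    (memLp_two_iff_integrable_sq ((hgm.comp (hw i)).aestronglyMeasurable)).mpr (hX2int i)
  have hXvar : ∀ i, variance (fun ω => g (w i ω)) μ
      = C ^ 2 * Real.exp (2 * Sq) - (C * Real.exp (Sq / 2)) ^ 2 := fun i => by
    rw [variance_eq_sub (hXmem i)]
    have h1 : μ[(fun ω => g (w i ω)) ^ 2] = C ^ 2 * Real.exp (2 * Sq) := by
      rw [← hXE2 i]
      congr 1
    rw [h1, hXE i]
  -- variance of the sum
  have hsum_eq : (fun ω => ∑ i, g (w i ω)) = ∑ i, (fun ω => g (w i ω)) := by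
    funext ω
    simp
  have hVsum : variance (fun ω => ∑ i, g (w i ω)) μ
      = (m : ℝ) * (C ^ 2 * Real.exp (2 * Sq) - (C * Real.exp (Sq / 2)) ^ 2) := by
    rw [hsum_eq, IndepFun.variance_sum (fun i _ => hXmem i)
      (fun i _ j _ hij => (hindep.indepFun hij).comp hgm hgm)]
    simp_rw [hXvar]
    rw [Finset.sum_const, Finset.card_univ, Fintype.card_fin, nsmul_eq_mul]
  -- the estimator
  have hFeq : (fun ω => (1 / (m : ℝ)) * ∑ i,
      Real.exp (∑ j, w i ω j * (q j / Real.sqrt τ) - (∑ j, (q j / Real.sqrt τ) ^ 2) / 2)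
      * Real.exp (∑ j, w i ω j * (k j / Real.sqrt τ) - (∑ j, (k j / Real.sqrt τ) ^ 2) / 2))
      = fun ω => (1 / (m : ℝ)) * ∑ i, g (w i ω) := by
    funext ω
    congr 1
    exact Finset.sum_congr rfl fun i _ => hXeq i ω
  have hVarF : variance (fun ω => (1 / (m : ℝ)) * ∑ i,
      Real.exp (∑ j, w i ω j * (q j / Real.sqrt τ) - (∑ j, (q j / Real.sqrt τ) ^ 2) / 2)
      * Real.exp (∑ j, w i ω j * (k j / Real.sqrt τ) - (∑ j, (k j / Real.sqrt τ) ^ 2) / 2)) μ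
      = (1 / (m : ℝ)) ^ 2 * ((m : ℝ) * (C ^ 2 * Real.exp (2 * Sq)
          - (C * Real.exp (Sq / 2)) ^ 2)) := by
    rw [hFeq, variance_const_mul, hVsum]
  -- the variance bound
  have hEg2bound : C ^ 2 * Real.exp (2 * Sq) ≤ Real.exp (6 * r ^ 2 / τ) := by
    rw [hCdef, ← Real.exp_nat_mul, ← Real.exp_add]
    apply Real.exp_le_exp.mpr
    have : (2 : ℕ) * -((A + B) / 2) + 2 * Sq = A + B + 4 * P := by
      rw [hSqEq]; push_cast; ring
    rw [this]
    have h6 : 6 * r ^ 2 / τ = r ^ 2 / τ + r ^ 2 / τ + 4 * (r ^ 2 / τ) := by ring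
    rw [h6]
    have h4P : 4 * P ≤ 4 * (r ^ 2 / τ) := by linarith
    linarith
  have hVarBound : variance (fun ω => (1 / (m : ℝ)) * ∑ i,
      Real.exp (∑ j, w i ω j * (q j / Real.sqrt τ) - (∑ j, (q j / Real.sqrt τ) ^ 2) / 2)
      * Real.exp (∑ j, w i ω j * (k j / Real.sqrt τ) - (∑ j, (k j / Real.sqrt τ) ^ 2) / 2)) μ
      ≤ Real.exp (6 * r ^ 2 / τ) / m := by
    rw [hVarF]
    have h1 : C ^ 2 * Real.exp (2 * Sq) - (C * Real.exp (Sq / 2)) ^ 2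
        ≤ Real.exp (6 * r ^ 2 / τ) := le_trans (sub_le_self _ (sq_nonneg _)) hEg2bound
    calc (1 / (m : ℝ)) ^ 2 * ((m : ℝ) * (C ^ 2 * Real.exp (2 * Sq)
          - (C * Real.exp (Sq / 2)) ^ 2))
        ≤ (1 / (m : ℝ)) ^ 2 * ((m : ℝ) * Real.exp (6 * r ^ 2 / τ)) := by
          apply mul_le_mul_of_nonneg_left _ (by positivity)
          exact mul_le_mul_of_nonneg_left h1 (by positivity)
      _ = Real.exp (6 * r ^ 2 / τ) / m := by
          field_simp
  refine ⟨hVarBound, ?_⟩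
  set F : Ω → ℝ := fun ω => (1 / (m : ℝ)) * ∑ i, g (w i ω) with hFdef
  have hFmeas : Measurable F := by
    apply measurable_const.mul
    exact Finset.measurable_sum Finset.univ fun i _ => hgm.comp (hw i)
  have hFmem : MemLp F 2 μ := by
    have h1 := memLp_finset_sum' (μ := μ) Finset.univ
      (fun i (_ : i ∈ Finset.univ) => hXmem i)
    have h2 := h1.const_mul (1 / (m : ℝ))
    have h3 : (fun ω => (1 / (m : ℝ)) * (∑ i, (fun ω' => g (w i ω'))) ω) = F := by
      funext ω
      rw [hFdef]
      simp
    rwa [h3] at h2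
  have hEF : μ[F] = C * Real.exp (Sq / 2) := by
    calc μ[F] = (1 / (m : ℝ)) * ∫ ω, ∑ i, g (w i ω) ∂μ := integral_const_mul _ _
      _ = (1 / (m : ℝ)) * ∑ i, ∫ ω, g (w i ω) ∂μ := by
          rw [integral_finset_sum _ (fun i _ => hXint i)]
      _ = (1 / (m : ℝ)) * ((m : ℝ) * (C * Real.exp (Sq / 2))) := by
          simp_rw [hXE]
          rw [Finset.sum_const, Finset.card_univ, Fintype.card_fin, nsmul_eq_mul]
      _ = C * Real.exp (Sq / 2) := by field_simp
  have hEFval : C * Real.exp (Sq / 2) = Real.exp ((∑ j, q j * k j) / τ) := by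
    rw [hCdef, ← Real.exp_add, ← hPeq]
    congr 1
    rw [hSqEq]
    ring
  set c : ℝ := Real.sqrt (Real.exp (6 * r ^ 2 / τ) / (m * ε)) with hcdef
  have hcpos : 0 < c := Real.sqrt_pos.mpr (by positivity)
  have hcsq : c ^ 2 = Real.exp (6 * r ^ 2 / τ) / (m * ε) := Real.sq_sqrt (by positivity)
  have hVF : variance F μ ≤ Real.exp (6 * r ^ 2 / τ) / m := by
    rw [hFeq] at hVarBound
    exact hVarBound
  have hcheb := meas_ge_le_variance_div_sq (μ := μ) hFmem hcpos
  have hratio : variance F μ / c ^ 2 ≤ ε := by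
    rw [hcsq]
    have hd : (0 : ℝ) < Real.exp (6 * r ^ 2 / τ) / (m * ε) := by positivity
    calc variance F μ / (Real.exp (6 * r ^ 2 / τ) / (m * ε))
        ≤ (Real.exp (6 * r ^ 2 / τ) / m) / (Real.exp (6 * r ^ 2 / τ) / (m * ε)) := by
          gcongr
      _ = ε := by
          have hE : (0:ℝ) < Real.exp (6 * r ^ 2 / τ) := Real.exp_pos _
          field_simp
  have hchebε : μ {ω | c ≤ |F ω - μ[F]|} ≤ ENNReal.ofReal ε :=
    hcheb.trans (ENNReal.ofReal_le_ofReal hratio)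
  have hAms : MeasurableSet {ω | c ≤ |F ω - μ[F]|} :=
    measurableSet_le measurable_const ((hFmeas.sub measurable_const).abs)
  have hsub : {ω | c ≤ |F ω - μ[F]|}ᶜ ⊆ {ω |
      |(1 / (m : ℝ)) * (∑ i,
          Real.exp (∑ j, w i ω j * (q j / Real.sqrt τ) - (∑ j, (q j / Real.sqrt τ) ^ 2) / 2)
          * Real.exp (∑ j, w i ω j * (k j / Real.sqrt τ)
              - (∑ j, (k j / Real.sqrt τ) ^ 2) / 2))
        - Real.exp ((∑ j, q j * k j) / τ)| ≤ c} := by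
    intro ω hω
    simp only [Set.mem_compl_iff, Set.mem_setOf_eq, not_le] at hω ⊢
    have h1 : (∑ i,
        Real.exp (∑ j, w i ω j * (q j / Real.sqrt τ) - (∑ j, (q j / Real.sqrt τ) ^ 2) / 2)
        * Real.exp (∑ j, w i ω j * (k j / Real.sqrt τ)
            - (∑ j, (k j / Real.sqrt τ) ^ 2) / 2)) = ∑ i, g (w i ω) :=
      Finset.sum_congr rfl fun i _ => hXeq i ω
    rw [h1, ← hEFval, ← hEF]
    exact hω.le
  calc ENNReal.ofReal (1 - ε) = 1 - ENNReal.ofReal ε := by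
        rw [ENNReal.ofReal_sub _ hε0.le, ENNReal.ofReal_one]
    _ ≤ 1 - μ {ω | c ≤ |F ω - μ[F]|} := tsub_le_tsub_left hchebε 1
    _ = μ ({ω | c ≤ |F ω - μ[F]|}ᶜ) := (prob_compl_eq_one_sub hAms).symm
    _ ≤ _ := measure_mono hsub
end
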